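/- Let X ~ SN₂(θ⃗, R) with θ⃗ = (θ,θ), θ ∈ ℝ, and R having off-diagonal ρ. Then X can be represented in distribution as αV·(1,1) + Z, where α = θ(1+ρ)/√(1+2θ²(1+ρ)), V = |W| with W standard normal independent of Z, and Z is bivariate normal with mean 0 and covariance Ψ = R - (1+θ⃗ᵀRθ⃗)^{-1} Rθ⃗θ⃗ᵀR, with Ψ having diagonal entries (1+θ²(1-ρ²))/(1+2θ²(1+ρ)) and off-diagonal (ρ-θ²(1-ρ²))/(1+2θ²(1+ρ)). -/

import Mathlib

open Real MeasureTheory Filter Set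

noncomputable def stdNormalPdf (t : ℝ) : ℝ := (Real.sqrt (2 * π))⁻¹ * Real.exp (-t ^ 2 / 2)

noncomputable def stdNormalCdf (z : ℝ) : ℝ := ∫ t in Set.Iic z, stdNormalPdf t

noncomputable def biNormalPdf (r : ℝ) (p : ℝ × ℝ) : ℝ :=
  (2 * π * Real.sqrt (1 - r ^ 2))⁻¹ *
    Real.exp (-(p.1 ^ 2 - 2 * r * p.1 * p.2 + p.2 ^ 2) / (2 * (1 - r ^ 2)))

noncomputable def biSkewNormalPdf (θ ρ : ℝ) (p : ℝ × ℝ) : ℝ :=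
  2 * biNormalPdf ρ p * stdNormalCdf (θ * p.1 + θ * p.2)

/-- Bivariate centred normal density with covariance matrix [[s,c],[c,s]]. -/
noncomputable def biNormalPdfCov (s c : ℝ) (p : ℝ × ℝ) : ℝ :=
  (2 * π * Real.sqrt (s ^ 2 - c ^ 2))⁻¹ *
    Real.exp (-(s * p.1 ^ 2 - 2 * c * p.1 * p.2 + s * p.2 ^ 2) / (2 * (s ^ 2 - c ^ 2)))

/-- Half-normal density. -/
noncomputable def halfNormalPdf (v : ℝ) : ℝ :=
  if 0 < v then Real.sqrt (2 / π) * Real.exp (-v ^ 2 / 2) else 0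

lemma shiftIic (m : ℝ) (f : ℝ → ℝ) : ∫ x in Iic m, f x = ∫ x in Iic (0:ℝ), f (x + m) := by
  have A : MeasurableEmbedding (fun x : ℝ => x + m) :=
    (Homeomorph.addRight m).isClosedEmbedding.measurableEmbedding
  have h := A.setIntegral_map (μ := volume) f (Iic m)
  rw [map_add_right_eq_self volume m] at h
  rw [h]
  congr 1
  ext x; simp

lemma gaussShift (m : ℝ) :
    ∫ w in Ioi (0:ℝ), Real.exp (-(w - m)^2/2) = ∫ t in Iic m, Real.exp (-t^2/2) := by
  rw [shiftIic m (fun t => Real.exp (-t^2/2))]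
  have h := integral_comp_neg_Iic (0:ℝ) (fun t => Real.exp (-(t - m)^2/2))
  simp only [neg_zero] at h
  rw [← h]
  congr 1
  ext x
  ring_nf

lemma stdCdf_eq (m : ℝ) : ∫ t in Iic m, Real.exp (-t^2/2) = Real.sqrt (2*π) * stdNormalCdf m := by
  simp only [stdNormalCdf, stdNormalPdf, integral_const_mul]
  rw [← mul_assoc, mul_inv_cancel₀ (by positivity : Real.sqrt (2*π) ≠ 0), one_mul]

/-- Normal mean-mixture representation of the equi-skew bivariate skew normal:
X ≐ αV·(1,1) + Z, expressed as the identity of densities: the SN₂ density equals the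
mixture over the half-normal variable V of the bivariate normal density with covariance Ψ,
whose diagonal entries are (1+θ²(1-ρ²))/(1+2θ²(1+ρ)) and off-diagonal entries
(ρ-θ²(1-ρ²))/(1+2θ²(1+ρ)). -/
theorem biSkewNormal_mixture_representation (θ ρ : ℝ) (hρ : -1 < ρ) (hρ' : ρ < 1) :
    ∀ p : ℝ × ℝ,
      biSkewNormalPdf θ ρ p =
        ∫ v in Set.Ioi (0 : ℝ), halfNormalPdf v *
          biNormalPdfCov ((1 + θ ^ 2 * (1 - ρ ^ 2)) / (1 + 2 * θ ^ 2 * (1 + ρ)))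
            ((ρ - θ ^ 2 * (1 - ρ ^ 2)) / (1 + 2 * θ ^ 2 * (1 + ρ)))
            (p.1 - θ * (1 + ρ) / Real.sqrt (1 + 2 * θ ^ 2 * (1 + ρ)) * v,
             p.2 - θ * (1 + ρ) / Real.sqrt (1 + 2 * θ ^ 2 * (1 + ρ)) * v) := by
  rintro ⟨x, y⟩
  have hd : (0:ℝ) < 1 + 2 * θ ^ 2 * (1 + ρ) := by nlinarith [sq_nonneg θ]
  have h1ρ : (0:ℝ) < 1 - ρ ^ 2 := by nlinarith
  set u : ℝ := Real.sqrt (1 + 2 * θ ^ 2 * (1 + ρ)) with hu_def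
  have hu : 0 < u := Real.sqrt_pos.mpr hd
  have hu2 : u ^ 2 = 1 + 2 * θ ^ 2 * (1 + ρ) := Real.sq_sqrt hd.le
  set s : ℝ := (1 + θ ^ 2 * (1 - ρ ^ 2)) / (1 + 2 * θ ^ 2 * (1 + ρ)) with hs_def
  set c : ℝ := (ρ - θ ^ 2 * (1 - ρ ^ 2)) / (1 + 2 * θ ^ 2 * (1 + ρ)) with hc_def
  have hsc : s ^ 2 - c ^ 2 = (1 - ρ ^ 2) / (1 + 2 * θ ^ 2 * (1 + ρ)) := by
    rw [hs_def, hc_def, div_pow, div_pow, ← sub_div, div_eq_div_iff (pow_ne_zero 2 hd.ne') hd.ne']; ring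
  set m : ℝ := θ * x + θ * y with hm_def
  set K : ℝ := Real.sqrt (2/π) * (2 * π * Real.sqrt ((1 - ρ ^ 2) / (1 + 2 * θ ^ 2 * (1 + ρ))))⁻¹ *
      Real.exp (-(x ^ 2 - 2 * ρ * x * y + y ^ 2) / (2 * (1 - ρ ^ 2))) with hK_def
  -- pointwise identity after substitution w = u * v
  have hpt : ∀ w ∈ Ioi (0:ℝ),
      halfNormalPdf (w / u) * biNormalPdfCov s c
        (x - θ * (1 + ρ) / u * (w / u), y - θ * (1 + ρ) / u * (w / u))
      = K * Real.exp (-(w - m) ^ 2 / 2) := by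
    intro w hw
    have hwu : 0 < w / u := div_pos hw hu
    have e1 : θ * (1 + ρ) / u * (w / u) = θ * (1 + ρ) * w / (1 + 2 * θ ^ 2 * (1 + ρ)) := by
      rw [div_mul_div_comm, ← hu2]; ring
    have e2 : (w / u) ^ 2 = w ^ 2 / (1 + 2 * θ ^ 2 * (1 + ρ)) := by
      rw [div_pow, hu2]
    rw [halfNormalPdf, if_pos hwu, biNormalPdfCov, e1, e2, hsc]
    have hE :
        -(w ^ 2 / (1 + 2 * θ ^ 2 * (1 + ρ))) / 2 +
        (-(s * (x - θ * (1 + ρ) * w / (1 + 2 * θ ^ 2 * (1 + ρ))) ^ 2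
          - 2 * c * (x - θ * (1 + ρ) * w / (1 + 2 * θ ^ 2 * (1 + ρ))) * (y - θ * (1 + ρ) * w / (1 + 2 * θ ^ 2 * (1 + ρ)))
          + s * (y - θ * (1 + ρ) * w / (1 + 2 * θ ^ 2 * (1 + ρ))) ^ 2)
          / (2 * ((1 - ρ ^ 2) / (1 + 2 * θ ^ 2 * (1 + ρ))))) =
        -(x ^ 2 - 2 * ρ * x * y + y ^ 2) / (2 * (1 - ρ ^ 2)) + -(w - m) ^ 2 / 2 := by
      rw [hs_def, hc_def, hm_def]
      field_simp
      ring
    calc Real.sqrt (2/π) * Real.exp (-(w ^ 2 / (1 + 2 * θ ^ 2 * (1 + ρ))) / 2) *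
          ((2 * π * Real.sqrt ((1 - ρ ^ 2) / (1 + 2 * θ ^ 2 * (1 + ρ))))⁻¹ *
            Real.exp (-(s * (x - θ * (1 + ρ) * w / (1 + 2 * θ ^ 2 * (1 + ρ))) ^ 2
              - 2 * c * (x - θ * (1 + ρ) * w / (1 + 2 * θ ^ 2 * (1 + ρ))) * (y - θ * (1 + ρ) * w / (1 + 2 * θ ^ 2 * (1 + ρ)))
              + s * (y - θ * (1 + ρ) * w / (1 + 2 * θ ^ 2 * (1 + ρ))) ^ 2)
              / (2 * ((1 - ρ ^ 2) / (1 + 2 * θ ^ 2 * (1 + ρ))))))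
        = Real.sqrt (2/π) * (2 * π * Real.sqrt ((1 - ρ ^ 2) / (1 + 2 * θ ^ 2 * (1 + ρ))))⁻¹ *
            Real.exp (-(w ^ 2 / (1 + 2 * θ ^ 2 * (1 + ρ))) / 2 +
              (-(s * (x - θ * (1 + ρ) * w / (1 + 2 * θ ^ 2 * (1 + ρ))) ^ 2
              - 2 * c * (x - θ * (1 + ρ) * w / (1 + 2 * θ ^ 2 * (1 + ρ))) * (y - θ * (1 + ρ) * w / (1 + 2 * θ ^ 2 * (1 + ρ)))
              + s * (y - θ * (1 + ρ) * w / (1 + 2 * θ ^ 2 * (1 + ρ))) ^ 2)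
              / (2 * ((1 - ρ ^ 2) / (1 + 2 * θ ^ 2 * (1 + ρ)))))) := by
          rw [Real.exp_add]; ring
      _ = K * Real.exp (-(w - m) ^ 2 / 2) := by
          rw [hE, Real.exp_add, hK_def]; ring
  -- substitution w = u * v
  have hsub : (∫ v in Ioi (0:ℝ), halfNormalPdf v * biNormalPdfCov s c
        (x - θ * (1 + ρ) / u * v, y - θ * (1 + ρ) / u * v))
      = u⁻¹ * ∫ w in Ioi (0:ℝ), halfNormalPdf (w / u) * biNormalPdfCov s c
        (x - θ * (1 + ρ) / u * (w / u), y - θ * (1 + ρ) / u * (w / u)) := by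
    have h := integral_comp_mul_left_Ioi (fun w => halfNormalPdf (w / u) * biNormalPdfCov s c
        (x - θ * (1 + ρ) / u * (w / u), y - θ * (1 + ρ) / u * (w / u))) 0 hu
    simp only [mul_zero, smul_eq_mul] at h
    rw [← h]
    refine setIntegral_congr_fun measurableSet_Ioi (fun v _ => ?_)
    rw [mul_div_cancel_left₀ _ hu.ne']
  rw [hsub]
  rw [setIntegral_congr_fun measurableSet_Ioi hpt]
  rw [integral_const_mul, gaussShift, stdCdf_eq]
  -- final constant algebra
  simp only [biSkewNormalPdf, biNormalPdf]
  rw [hK_def, hm_def]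
  have hsd : Real.sqrt ((1 - ρ ^ 2) / (1 + 2 * θ ^ 2 * (1 + ρ))) = Real.sqrt (1 - ρ ^ 2) / u := by
    rw [hu_def, Real.sqrt_div h1ρ.le]
  have h2 : Real.sqrt (2/π) * Real.sqrt (2*π) = 2 := by
    rw [← Real.sqrt_mul (by positivity)]
    rw [show (2/π) * (2*π) = 2^2 by field_simp]
    exact Real.sqrt_sq (by norm_num)
  rw [hsd]
  set S : ℝ := Real.sqrt (1 - ρ ^ 2) with hS_def
  have hs1 : 0 < S := Real.sqrt_pos.mpr h1ρ
  have e : (2 * π * (S / u))⁻¹ = u * (2 * π * S)⁻¹ := by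
    rw [eq_comm, mul_comm u]
    field_simp
  rw [e]
  have hscal : u⁻¹ * (Real.sqrt (2/π) * (u * (2 * π * S)⁻¹)) * Real.sqrt (2*π)
      = 2 * (2 * π * S)⁻¹ := by
    rw [show u⁻¹ * (Real.sqrt (2/π) * (u * (2 * π * S)⁻¹)) * Real.sqrt (2*π)
        = (u⁻¹ * u) * ((Real.sqrt (2/π) * Real.sqrt (2*π)) * (2 * π * S)⁻¹) from by ring,
      inv_mul_cancel₀ hu.ne', h2, one_mul]
  linear_combination (-Real.exp (-(x ^ 2 - 2 * ρ * x * y + y ^ 2) / (2 * (1 - ρ ^ 2))) *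
    stdNormalCdf (θ * x + θ * y)) * hscal
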